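/- Asymptotic matching of the tunnelling time: fix real β ≥ 0 and real γ, and for E sufficiently negative define T(E) = (1/2)·∫₀^∞ (4π²e^{2w} − βe^{w} + γ − E)^{−1/2} dw. Then E·( T(E) − (1/(2√(−E)))·log(√(−E)/π) ) tends to −β/(8π) as E → −∞. In particular, T(E) matches the expansion (1/(2√(−E)))·log(√(−E)/π) − κ/(2E) to order E^{−1} if and only if β = 4πκ, independently of γ. -/

import Mathlib

open Filter MeasureTheory

set_option maxHeartbeats 1000000

namespace MorseAux
open Real Topology

lemma sqrt_tendsto_atTop : Tendsto Real.sqrt atTop atTop := by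
  apply tendsto_atTop_atTop.2
  intro b
  refine ⟨b ^ 2, fun a ha => ?_⟩
  calc b ≤ |b| := le_abs_self b
    _ = Real.sqrt (b ^ 2) := (Real.sqrt_sq_eq_abs b).symm
    _ ≤ Real.sqrt a := Real.sqrt_le_sqrt ha

lemma abs_log_one_add_le {x : ℝ} (hx : -(1/2) ≤ x) : |Real.log (1 + x)| ≤ 2 * |x| := by
  have h1 : (0:ℝ) < 1 + x := by linarith
  rcases le_or_gt 0 x with h | h
  · have h2 : Real.log (1 + x) ≤ x := by
      have := Real.log_le_sub_one_of_pos h1; linarith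
    have h3 : 0 ≤ Real.log (1 + x) := Real.log_nonneg (by linarith)
    rw [abs_of_nonneg h3, abs_of_nonneg h]; linarith
  · have h3 : Real.log (1 + x) ≤ 0 := Real.log_nonpos (by linarith) (by linarith)
    have h4 : Real.log (1+x)⁻¹ ≤ (1+x)⁻¹ - 1 := Real.log_le_sub_one_of_pos (by positivity)
    rw [Real.log_inv] at h4
    have h6 : (1+x)⁻¹ - 1 ≤ 2 * (-x) := by
      rw [inv_eq_one_div, div_sub' h1.ne', div_le_iff₀ h1]; nlinarith
    rw [abs_of_nonpos h3, abs_of_neg h]; linarith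

lemma alg (β s γ q r La Lb Lc Ls Lp L4 : ℝ) (hq0 : q ≠ 0) (hr0 : r ≠ 0) (hrq : r + q ≠ 0)
    (hq2 : q*q = γ + s) (hr2 : r*r = s) :
    -s * (1/2 * (q⁻¹ * (La - Lb)) - 1/(2*r) * (Ls/2 - Lp))
    = -(s/(2*q)) * (La - (L4 + Lc))
      + (s/(2*q)) * (Lb - (L4 + Lp + Lc/2))
      + (γ/4) * (Lc/q) * (r/(r+q))
      + -(r/4) * (Lc - Ls)
      + -(γ*Lp/2) * (r/(q*(r+q))) := by
  subst hr2
  have hγ : γ = q*q - r*r := by linarith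
  subst hγ
  field_simp
  ring

lemma decomp (β γ s : ℝ) (hβ : 0 ≤ β) (hs1 : 1 ≤ s) (hcβ : β^2 + 1 ≤ γ + s) :
    -s * (1 / 2 * ((Real.sqrt (γ + s))⁻¹ *
        (Real.log (2*(γ+s) - β + 2*Real.sqrt (γ+s)*Real.sqrt (γ+s+4*Real.pi^2-β))
          - Real.log (4*Real.pi*Real.sqrt (γ+s) - β)))
      - 1/(2*Real.sqrt s) * Real.log (Real.sqrt s/Real.pi))
    = -(s/(2*Real.sqrt (γ+s))) * Real.log
          ((2*(γ+s) - β + 2*Real.sqrt (γ+s)*Real.sqrt (γ+s+4*Real.pi^2-β))/(4*(γ+s)))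
      + (s/(2*Real.sqrt (γ+s))) * Real.log (1 - β/(4*Real.pi*Real.sqrt (γ+s)))
      + (γ/4) * (Real.log (γ+s)/Real.sqrt (γ+s)) * (Real.sqrt s/(Real.sqrt s + Real.sqrt (γ+s)))
      + -(Real.sqrt s/4) * (Real.log (γ+s) - Real.log s)
      + -(γ*Real.log Real.pi/2) * (Real.sqrt s/(Real.sqrt (γ+s)*(Real.sqrt s + Real.sqrt (γ+s)))) := by
  have hπ := Real.pi_gt_three
  have hs0 : (0:ℝ) < s := by linarith
  have hc0 : (0:ℝ) < γ + s := by nlinarith [sq_nonneg β]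
  have hq0 : 0 < Real.sqrt (γ+s) := Real.sqrt_pos.2 hc0
  have hr0 : 0 < Real.sqrt s := Real.sqrt_pos.2 hs0
  have hq2 : Real.sqrt (γ+s) * Real.sqrt (γ+s) = γ + s := Real.mul_self_sqrt hc0.le
  have hr2 : Real.sqrt s * Real.sqrt s = s := Real.mul_self_sqrt hs0.le
  have hqβ : β < Real.sqrt (γ+s) := by nlinarith
  have hX0 : 0 ≤ Real.sqrt (γ+s+4*Real.pi^2-β) := Real.sqrt_nonneg _
  have hA : 0 < 2*(γ+s) - β + 2*Real.sqrt (γ+s)*Real.sqrt (γ+s+4*Real.pi^2-β) := by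
    have h1 : 0 ≤ 2*Real.sqrt (γ+s)*Real.sqrt (γ+s+4*Real.pi^2-β) := by positivity
    nlinarith [sq_nonneg β]
  have hB : 0 < 4*Real.pi*Real.sqrt (γ+s) - β := by nlinarith
  have e1 : Real.log ((2*(γ+s) - β + 2*Real.sqrt (γ+s)*Real.sqrt (γ+s+4*Real.pi^2-β))/(4*(γ+s)))
      = Real.log (2*(γ+s) - β + 2*Real.sqrt (γ+s)*Real.sqrt (γ+s+4*Real.pi^2-β))
        - Real.log (4*(γ+s)) := Real.log_div hA.ne' (by positivity)
  have e2 : (1 : ℝ) - β/(4*Real.pi*Real.sqrt (γ+s))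
      = (4*Real.pi*Real.sqrt (γ+s) - β)/(4*Real.pi*Real.sqrt (γ+s)) := by
    field_simp
  have e3 : Real.log ((4*Real.pi*Real.sqrt (γ+s) - β)/(4*Real.pi*Real.sqrt (γ+s)))
      = Real.log (4*Real.pi*Real.sqrt (γ+s) - β) - Real.log (4*Real.pi*Real.sqrt (γ+s)) :=
    Real.log_div hB.ne' (by positivity)
  have e4 : Real.log (4*(γ+s)) = Real.log 4 + Real.log (γ+s) :=
    Real.log_mul (by norm_num) hc0.ne'
  have e5 : Real.log (4*Real.pi*Real.sqrt (γ+s))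
      = Real.log 4 + Real.log Real.pi + Real.log (Real.sqrt (γ+s)) := by
    rw [Real.log_mul (by positivity) hq0.ne', Real.log_mul (by norm_num) Real.pi_ne_zero]
  have e6 : Real.log (Real.sqrt (γ+s)) = Real.log (γ+s)/2 := Real.log_sqrt hc0.le
  have e7 : Real.log (Real.sqrt s/Real.pi) = Real.log s/2 - Real.log Real.pi := by
    rw [Real.log_div hr0.ne' Real.pi_ne_zero, Real.log_sqrt hs0.le]
  rw [e1, e2, e3, e4, e5, e6, e7]
  exact alg β s γ _ _ _ _ _ _ _ _ hq0.ne' hr0.ne' (by positivity) hq2 hr2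

lemma tendsto_Psi (β γ : ℝ) (hβ : 0 ≤ β) :
    Tendsto (fun s : ℝ =>
      -(s/(2*Real.sqrt (γ+s))) * Real.log
          ((2*(γ+s) - β + 2*Real.sqrt (γ+s)*Real.sqrt (γ+s+4*Real.pi^2-β))/(4*(γ+s)))
      + (s/(2*Real.sqrt (γ+s))) * Real.log (1 - β/(4*Real.pi*Real.sqrt (γ+s)))
      + (γ/4) * (Real.log (γ+s)/Real.sqrt (γ+s)) * (Real.sqrt s/(Real.sqrt s + Real.sqrt (γ+s)))
      + -(Real.sqrt s/4) * (Real.log (γ+s) - Real.log s)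
      + -(γ*Real.log Real.pi/2) * (Real.sqrt s/(Real.sqrt (γ+s)*(Real.sqrt s + Real.sqrt (γ+s)))))
      atTop (𝓝 (-β/(8*Real.pi))) := by
  have hπ := Real.pi_gt_three
  have hcTop : Tendsto (fun s : ℝ => γ + s) atTop atTop :=
    tendsto_atTop_add_const_left _ γ tendsto_id
  have hqTop : Tendsto (fun s : ℝ => Real.sqrt (γ + s)) atTop atTop := sqrt_tendsto_atTop.comp hcTop
  have hrTop : Tendsto (fun s : ℝ => Real.sqrt s) atTop atTop := sqrt_tendsto_atTop
  have hqinv : Tendsto (fun s : ℝ => (Real.sqrt (γ+s))⁻¹) atTop (𝓝 0) :=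
    tendsto_inv_atTop_zero.comp hqTop
  have hsc : Tendsto (fun s : ℝ => s/(γ + s)) atTop (𝓝 1) := by
    have h0 : Tendsto (fun s : ℝ => 1 - γ * (γ + s)⁻¹) atTop (𝓝 (1 - γ * 0)) :=
      tendsto_const_nhds.sub ((tendsto_inv_atTop_zero.comp hcTop).const_mul γ)
    rw [mul_zero, sub_zero] at h0
    apply h0.congr'
    filter_upwards [eventually_gt_atTop (|γ|+1)] with s hs
    have hc0 : (0:ℝ) < γ + s := by
      have := abs_le.1 (le_refl |γ|) ; linarith [neg_abs_le γ]
    field_simp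
    ring
  have hrq : Tendsto (fun s : ℝ => Real.sqrt s/(Real.sqrt s + Real.sqrt (γ+s)))
      atTop (𝓝 (1/2)) := by
    have h1 : Tendsto (fun s : ℝ => 1 + γ/s) atTop (𝓝 1) := by
      have h0 : Tendsto (fun s : ℝ => 1 + γ * s⁻¹) atTop (𝓝 (1 + γ * 0)) :=
        tendsto_const_nhds.add (tendsto_inv_atTop_zero.const_mul γ)
      rw [mul_zero, add_zero] at h0
      exact h0.congr (fun s => by rw [div_eq_mul_inv])
    have h2 : Tendsto (fun s : ℝ => Real.sqrt (1 + γ/s)) atTop (𝓝 1) := by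
      have h := (Real.continuous_sqrt.continuousAt (x := (1:ℝ))).tendsto.comp h1
      simp only [Function.comp_def] at h
      rwa [Real.sqrt_one] at h
    have h3 : Tendsto (fun s : ℝ => (1 + Real.sqrt (1 + γ/s))⁻¹) atTop (𝓝 ((1+1:ℝ)⁻¹)) :=
      (tendsto_const_nhds.add h2).inv₀ (by norm_num)
    have h4 : ((1:ℝ)+1)⁻¹ = 1/2 := by norm_num
    rw [h4] at h3
    apply h3.congr'
    filter_upwards [eventually_gt_atTop (0:ℝ), eventually_gt_atTop (|γ|+1)] with s hs0 hsγ
    have hc0 : (0:ℝ) < γ + s := by linarith [neg_abs_le γ]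
    have hr0 : 0 < Real.sqrt s := Real.sqrt_pos.2 hs0
    have hsplit : Real.sqrt (γ+s) = Real.sqrt s * Real.sqrt (1 + γ/s) := by
      rw [← Real.sqrt_mul hs0.le]
      congr 1
      field_simp
      ring
    rw [hsplit]
    have hy0 : 0 < Real.sqrt (1 + γ/s) := Real.sqrt_pos.2 (by
      have h11 : (1:ℝ) + γ/s = (γ+s)/s := by field_simp; ring
      rw [h11]; positivity)
    field_simp
  -- T2
  have hT2 : Tendsto (fun s : ℝ => (s/(2*Real.sqrt (γ+s))) * Real.log (1 - β/(4*Real.pi*Real.sqrt (γ+s))))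
      atTop (𝓝 (-β/(8*Real.pi))) := by
    have hmull := (Real.tendsto_mul_log_one_add_div_atTop (-β/(4*Real.pi))).comp hqTop
    simp only [Function.comp_def] at hmull
    have hcomb := hsc.mul (hmull.const_mul (1/2))
    have hval : (1:ℝ) * (1/2 * (-β/(4*Real.pi))) = -β/(8*Real.pi) := by ring
    rw [hval] at hcomb
    apply hcomb.congr'
    filter_upwards [eventually_gt_atTop (|γ|+1)] with s hs
    have hc0 : (0:ℝ) < γ + s := by linarith [neg_abs_le γ]
    have hq0 : 0 < Real.sqrt (γ+s) := Real.sqrt_pos.2 hc0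
    have hq2 : Real.sqrt (γ+s) * Real.sqrt (γ+s) = γ + s := Real.mul_self_sqrt hc0.le
    have harg : 1 + -β/(4*Real.pi)/Real.sqrt (γ+s) = 1 - β/(4*Real.pi*Real.sqrt (γ+s)) := by
      rw [div_div]; ring
    rw [harg]
    set q := Real.sqrt (γ+s) with hqd
    generalize Real.log (1 - β/(4*Real.pi*q)) = L
    rw [← hq2]
    field_simp
  -- T1
  have hT1 : Tendsto (fun s : ℝ => -(s/(2*Real.sqrt (γ+s))) * Real.log
      ((2*(γ+s) - β + 2*Real.sqrt (γ+s)*Real.sqrt (γ+s+4*Real.pi^2-β))/(4*(γ+s))))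
      atTop (𝓝 0) := by
    set M : ℝ := 2*|4*Real.pi^2 - β| + β with hM
    have hM0 : 0 ≤ M := by positivity
    have hg : Tendsto (fun s : ℝ => (M/4) * (s/(γ+s) * (Real.sqrt (γ+s))⁻¹)) atTop (𝓝 0) := by
      have h := (hsc.mul hqinv).const_mul (M/4)
      have hz : M/4 * ((1:ℝ)*0) = 0 := by ring
      rw [hz] at h
      exact h
    apply squeeze_zero_norm' ?_ hg
    filter_upwards [eventually_gt_atTop (|γ|+1), eventually_ge_atTop (β^2+1-γ),
      eventually_ge_atTop (M+1-γ), eventually_ge_atTop (1-γ)] with s hs1 hs2 hs3 hs4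
    have hc0 : (0:ℝ) < γ + s := by linarith [neg_abs_le γ]
    have hc1 : (1:ℝ) ≤ γ + s := by linarith
    have hcM : M ≤ γ + s := by linarith
    have hcβ : β^2 + 1 ≤ γ + s := by linarith
    have hq0 : 0 < Real.sqrt (γ+s) := Real.sqrt_pos.2 hc0
    have hq1 : 1 ≤ Real.sqrt (γ+s) := by
      rw [show (1:ℝ) = Real.sqrt 1 by rw [Real.sqrt_one]]
      exact Real.sqrt_le_sqrt hc1
    have hq2 : Real.sqrt (γ+s) * Real.sqrt (γ+s) = γ + s := Real.mul_self_sqrt hc0.le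
    have hs0 : (0:ℝ) < s := by linarith [abs_nonneg γ]
    have hcd : (0:ℝ) ≤ γ + s + 4*Real.pi^2 - β := by nlinarith [sq_nonneg β]
    have hX0 : 0 ≤ Real.sqrt (γ+s+4*Real.pi^2-β) := Real.sqrt_nonneg _
    have hX2 : Real.sqrt (γ+s+4*Real.pi^2-β) * Real.sqrt (γ+s+4*Real.pi^2-β)
        = γ+s+4*Real.pi^2-β := Real.mul_self_sqrt hcd
    set q := Real.sqrt (γ+s)
    set X := Real.sqrt (γ+s+4*Real.pi^2-β)
    have hXq : 0 < X + q := by linarith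
    have hkey : (q*(X-q))*(X+q) = q*(4*Real.pi^2-β) := by
      linear_combination q*hX2 - q*hq2
    have hdiv : q*(X-q) = q*(4*Real.pi^2-β)/(X+q) := by
      rw [eq_div_iff hXq.ne']; linear_combination hkey
    have habsq : |q*(X-q)| ≤ |4*Real.pi^2-β| := by
      rw [hdiv, abs_div, abs_of_pos hXq, abs_mul, abs_of_pos hq0, div_le_iff₀ hXq]
      nlinarith [mul_nonneg (abs_nonneg (4*Real.pi^2-β)) hX0]
    obtain ⟨hq_lo, hq_hi⟩ := abs_le.1 habsq
    have hA4c : (2*(γ+s) - β + 2*q*X) - 4*(γ+s) = 2*(q*(X-q)) - β := by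
      linear_combination 2*hq2
    have habsA : |(2*(γ+s) - β + 2*q*X) - 4*(γ+s)| ≤ M := by
      rw [hA4c]
      rw [abs_le]
      constructor <;> [nlinarith; nlinarith]
    have hApos : 0 < 2*(γ+s) - β + 2*q*X := by
      have h1 : 0 ≤ 2*q*X := by positivity
      nlinarith [sq_nonneg β]
    have hx : |(2*(γ+s) - β + 2*q*X)/(4*(γ+s)) - 1| ≤ M/(4*(γ+s)) := by
      rw [show (2*(γ+s) - β + 2*q*X)/(4*(γ+s)) - 1
          = ((2*(γ+s) - β + 2*q*X) - 4*(γ+s))/(4*(γ+s)) by field_simp]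
      rw [abs_div, abs_of_pos (by positivity : (0:ℝ) < 4*(γ+s))]
      gcongr
    have hM2 : M/(4*(γ+s)) ≤ 1/2 := by
      rw [div_le_iff₀ (by positivity)]; linarith
    have hxlow : -(1/2) ≤ (2*(γ+s) - β + 2*q*X)/(4*(γ+s)) - 1 := by
      have := abs_le.1 hx; linarith
    have hlogb : |Real.log ((2*(γ+s) - β + 2*q*X)/(4*(γ+s)))| ≤ 2*(M/(4*(γ+s))) := by
      have h := abs_log_one_add_le hxlow
      rw [show 1 + ((2*(γ+s) - β + 2*q*X)/(4*(γ+s)) - 1)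
          = (2*(γ+s) - β + 2*q*X)/(4*(γ+s)) by ring] at h
      have := abs_le.1 hx
      calc |Real.log ((2*(γ+s) - β + 2*q*X)/(4*(γ+s)))|
          ≤ 2*|(2*(γ+s) - β + 2*q*X)/(4*(γ+s)) - 1| := h
        _ ≤ 2*(M/(4*(γ+s))) := by linarith [abs_le.1 hx, hx]
    rw [Real.norm_eq_abs, abs_mul, abs_neg, abs_of_pos (by positivity : (0:ℝ) < s/(2*q))]
    calc s/(2*q) * |Real.log ((2*(γ+s) - β + 2*q*X)/(4*(γ+s)))|
        ≤ s/(2*q) * (2*(M/(4*(γ+s)))) := by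
          apply mul_le_mul_of_nonneg_left hlogb (by positivity)
      _ = M/4 * (s/(γ+s) * q⁻¹) := by field_simp
  -- T3a
  have hlogq : Tendsto (fun s : ℝ => Real.log (γ+s)/Real.sqrt (γ+s)) atTop (𝓝 0) := by
    have h := Real.isLittleO_log_id_atTop.tendsto_div_nhds_zero
    have h2 := h.comp hqTop
    simp only [Function.comp_def, id_eq] at h2
    have h3 := h2.const_mul (2:ℝ)
    rw [mul_zero] at h3
    apply h3.congr'
    filter_upwards [eventually_gt_atTop (|γ|+1)] with s hs
    have hc0 : (0:ℝ) < γ + s := by linarith [neg_abs_le γ]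
    rw [Real.log_sqrt hc0.le]
    ring
  have hT3a : Tendsto (fun s : ℝ =>
      (γ/4) * (Real.log (γ+s)/Real.sqrt (γ+s)) * (Real.sqrt s/(Real.sqrt s + Real.sqrt (γ+s))))
      atTop (𝓝 0) := by
    have h := (hlogq.const_mul (γ/4)).mul hrq
    have hz : (γ/4 * 0) * (1/2 : ℝ) = 0 := by ring
    rw [hz] at h
    exact h
  -- T3b
  have hT3b : Tendsto (fun s : ℝ => -(Real.sqrt s/4) * (Real.log (γ+s) - Real.log s))
      atTop (𝓝 0) := by
    have h1 := Real.tendsto_mul_log_one_add_div_atTop γ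
    have h2 : Tendsto (fun s : ℝ => ((4:ℝ)*Real.sqrt s)⁻¹) atTop (𝓝 0) :=
      tendsto_inv_atTop_zero.comp (hrTop.const_mul_atTop (by norm_num : (0:ℝ) < 4))
    have h3 := (h2.mul h1).neg
    rw [zero_mul, neg_zero] at h3
    apply h3.congr'
    filter_upwards [eventually_gt_atTop (0:ℝ), eventually_gt_atTop (|γ|+1)] with s hs0 hsγ
    have hc0 : (0:ℝ) < γ + s := by linarith [neg_abs_le γ]
    have hr0 : 0 < Real.sqrt s := Real.sqrt_pos.2 hs0
    have hr2 : Real.sqrt s * Real.sqrt s = s := Real.mul_self_sqrt hs0.le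
    have harg : Real.log (1 + γ/s) = Real.log (γ+s) - Real.log s := by
      rw [show (1:ℝ) + γ/s = (γ+s)/s by field_simp; ring]
      exact Real.log_div hc0.ne' hs0.ne'
    rw [harg]
    set r := Real.sqrt s with hrd
    generalize Real.log (γ+s) = L1
    generalize Real.log s = L2
    rw [← hr2]
    field_simp
  -- T3c
  have hT3c : Tendsto (fun s : ℝ =>
      -(γ*Real.log Real.pi/2) * (Real.sqrt s/(Real.sqrt (γ+s)*(Real.sqrt s + Real.sqrt (γ+s)))))
      atTop (𝓝 0) := by
    have h := (hqinv.mul hrq).const_mul (-(γ*Real.log Real.pi/2))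
    have hz : -(γ*Real.log Real.pi/2) * ((0:ℝ) * (1/2)) = 0 := by ring
    rw [hz] at h
    apply h.congr'
    filter_upwards [eventually_gt_atTop (0:ℝ), eventually_gt_atTop (|γ|+1)] with s hs0 hsγ
    have hc0 : (0:ℝ) < γ + s := by linarith [neg_abs_le γ]
    have hq0 : 0 < Real.sqrt (γ+s) := Real.sqrt_pos.2 hc0
    have hr0 : 0 < Real.sqrt s := Real.sqrt_pos.2 hs0
    have hrq0 : 0 < Real.sqrt s + Real.sqrt (γ+s) := by linarith
    field_simp
  -- sum
  have hsum := ((((hT1.add hT2).add hT3a).add hT3b).add hT3c)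
  have hz : ((((0 + -β/(8*Real.pi)) + 0) + 0) + 0 : ℝ) = -β/(8*Real.pi) := by ring
  rw [hz] at hsum
  exact hsum

lemma integral_eval (β γ : ℝ) (hβ : 0 ≤ β) (E : ℝ) (hE : β^2 + 1 ≤ γ - E) :
    ∫ w in Set.Ioi (0:ℝ),
        (Real.sqrt (4 * Real.pi ^ 2 * Real.exp (2 * w) - β * Real.exp w + γ - E))⁻¹
      = (Real.sqrt (γ - E))⁻¹ *
        (Real.log (2*(γ - E) - β + 2*Real.sqrt (γ - E) * Real.sqrt (γ - E + 4*Real.pi^2 - β))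
          - Real.log (4*Real.pi*Real.sqrt (γ - E) - β)) := by
  set c : ℝ := γ - E with hc
  have hπ := Real.pi_gt_three
  have hc0 : (0:ℝ) < c := by nlinarith [sq_nonneg β]
  have hc1 : (1:ℝ) ≤ c := by nlinarith [sq_nonneg β]
  set q : ℝ := Real.sqrt c with hqdef
  have hq0 : 0 < q := Real.sqrt_pos.2 hc0
  have hq2 : q * q = c := Real.mul_self_sqrt hc0.le
  have hqβ : β < q := by nlinarith
  -- positivity of the quadratic
  set P : ℝ → ℝ := fun w => 4 * Real.pi ^ 2 * Real.exp (2 * w) - β * Real.exp w + c with hPdef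
  have hP1 : ∀ w, 1 ≤ P w := by
    intro w
    have hu := Real.exp_pos w
    have h2w : Real.exp (2*w) = Real.exp w * Real.exp w := by
      rw [two_mul, Real.exp_add]
    have h41 : (0:ℝ) ≤ (4*Real.pi - 1) * (β * Real.exp w) :=
      mul_nonneg (by nlinarith) (mul_nonneg hβ hu.le)
    simp only [hPdef, h2w]
    nlinarith [sq_nonneg (2*Real.pi*Real.exp w - β)]
  have hPpos : ∀ w, 0 < P w := fun w => by linarith [hP1 w]
  -- N and positivity
  set N : ℝ → ℝ := fun w => 2*c - β * Real.exp w + 2*q*Real.sqrt (P w) with hNdef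
  have hNpos : ∀ w, 0 < N w := by
    intro w
    have hu := Real.exp_pos w
    have hp0 : 0 < Real.sqrt (P w) := Real.sqrt_pos.2 (hPpos w)
    have hp2 : Real.sqrt (P w) * Real.sqrt (P w) = P w := Real.mul_self_sqrt (hPpos w).le
    have h2w : Real.exp (2*w) = Real.exp w * Real.exp w := by rw [two_mul, Real.exp_add]
    have key : (β * Real.exp w - 2*c)^2 < (2*q*Real.sqrt (P w))^2 := by
      have expand : (2*q*Real.sqrt (P w))^2 = 4*c*(P w) := by
        rw [mul_pow, mul_pow]; nlinarith [hp2, hq2]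
      rw [expand]
      have hPw : P w = 4 * Real.pi ^ 2 * (Real.exp w * Real.exp w) - β * Real.exp w + c := by
        simp only [hPdef, h2w]
      rw [hPw]
      have h16 : 0 < 16*Real.pi^2*c - β^2 := by
        nlinarith [mul_nonneg (by nlinarith : (0:ℝ) ≤ Real.pi^2 - 9) hc0.le, sq_nonneg β]
      nlinarith [mul_pos (mul_pos hu hu) h16]
    have habs : β * Real.exp w - 2*c < 2*q*Real.sqrt (P w) := by
      rcases le_or_gt (β * Real.exp w - 2*c) 0 with h | h
      · exact lt_of_le_of_lt h (by positivity)
      · have hb : 0 < 2*q*Real.sqrt (P w) := by positivity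
        nlinarith [key, h, hb]
    simp only [hNdef]; linarith
  -- derivative
  have hderiv : ∀ w, HasDerivAt (fun w => q⁻¹ * (w - Real.log (N w)))
      ((Real.sqrt (4 * Real.pi ^ 2 * Real.exp (2 * w) - β * Real.exp w + γ - E))⁻¹) w := by
    intro w
    have hu := Real.exp_pos w
    have hp0 : 0 < Real.sqrt (P w) := Real.sqrt_pos.2 (hPpos w)
    have hp2 : Real.sqrt (P w) * Real.sqrt (P w) = P w := Real.mul_self_sqrt (hPpos w).le
    have h2w : Real.exp (2*w) = Real.exp w * Real.exp w := by rw [two_mul, Real.exp_add]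
    have hexp : HasDerivAt Real.exp (Real.exp w) w := Real.hasDerivAt_exp w
    have hexp2 : HasDerivAt (fun w => Real.exp (2*w)) (2 * Real.exp (2*w)) w := by
      have h := (Real.hasDerivAt_exp (2*w)).comp w ((hasDerivAt_id w).const_mul 2)
      simp only [Function.comp_def, id_eq] at h
      exact h.congr_deriv (by ring)
    have hP' : HasDerivAt P (8 * Real.pi ^ 2 * Real.exp (2*w) - β * Real.exp w) w := by
      have h := ((hexp2.const_mul (4 * Real.pi ^ 2)).sub (hexp.const_mul β)).add_const c
      exact h.congr_deriv (by ring)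
    have hsq : HasDerivAt (fun w => Real.sqrt (P w))
        ((8 * Real.pi ^ 2 * Real.exp (2*w) - β * Real.exp w) / (2 * Real.sqrt (P w))) w := by
      have h := (Real.hasDerivAt_sqrt (hPpos w).ne').comp w hP'
      simp only [Function.comp_def] at h
      exact h.congr_deriv (by ring)
    have hN' : HasDerivAt N
        (-(β * Real.exp w) + 2*q*((8 * Real.pi ^ 2 * Real.exp (2*w) - β * Real.exp w) / (2 * Real.sqrt (P w)))) w := by
      exact ((hexp.const_mul β).const_sub (2*c)).add (hsq.const_mul (2*q))
    have hlog : HasDerivAt (fun w => Real.log (N w))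
        ((-(β * Real.exp w) + 2*q*((8 * Real.pi ^ 2 * Real.exp (2*w) - β * Real.exp w) / (2 * Real.sqrt (P w)))) / N w) w :=
      hN'.log (hNpos w).ne'
    set u := Real.exp w with hudef
    set p := Real.sqrt (P w) with hpd
    have hp0 : 0 < p := Real.sqrt_pos.2 (hPpos w)
    have hp2 : p * p = 4 * Real.pi ^ 2 * (u * u) - β * u + c := by
      rw [hpd, Real.mul_self_sqrt (hPpos w).le]
      simp only [hPdef, h2w]
      rfl
    have hNw : N w = 2*c - β * u + 2*q*p := rfl
    have hval : q⁻¹ * (1 - (-(β * u) + 2*q*((8 * Real.pi ^ 2 * Real.exp (2*w) - β * u) / (2 * p))) / N w)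
        = p⁻¹ := by
      rw [h2w]
      have hX : (-(β*u) + 2*q*((8 * Real.pi ^ 2 * (u*u) - β*u) / (2*p)))
          = (q*(8 * Real.pi ^ 2 * (u*u) - β*u) - β*u*p)/p := by
        field_simp; ring
      rw [hX, div_div]
      have hpN : 0 < p * N w := mul_pos hp0 (hNpos w)
      have hnum : p * N w - (q*(8 * Real.pi ^ 2 * (u*u) - β*u) - β*u*p) = q * N w := by
        rw [hNw]; linear_combination (2*q)*hp2 - (2*p)*hq2
      have h5 : 1 - (q*(8 * Real.pi ^ 2 * (u*u) - β*u) - β*u*p) / (p * N w)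
          = (q * N w) / (p * N w) := by
        rw [eq_div_iff hpN.ne', sub_mul, one_mul, div_mul_cancel₀ _ hpN.ne']
        linarith [hnum]
      rw [h5]
      field_simp
      exact div_self (hNpos w).ne'
    have harg : 4 * Real.pi ^ 2 * Real.exp (2 * w) - β * Real.exp w + γ - E = P w := by
      simp only [hPdef]; rw [hc]; ring
    rw [harg, ← hpd, ← hval]
    exact ((hasDerivAt_id w).sub hlog).const_mul q⁻¹
  -- limit of the antiderivative at infinity
  have hBpos : 0 < 4*Real.pi*q - β := by nlinarith
  have hM : ∀ w, N w * Real.exp (-w)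
      = 2*c*Real.exp (-w) - β + 2*q*Real.sqrt (4*Real.pi^2 - β*Real.exp (-w) + c*Real.exp (-w)^2) := by
    intro w
    have h2w : Real.exp (2*w) = Real.exp w * Real.exp w := by rw [two_mul, Real.exp_add]
    have hee : Real.exp w * Real.exp (-w) = 1 := by rw [← Real.exp_add]; simp
    have h1 : Real.sqrt (P w) * Real.exp (-w) = Real.sqrt (P w * Real.exp (-w)^2) := by
      rw [Real.sqrt_mul (hPpos w).le, Real.sqrt_sq (Real.exp_pos (-w)).le]
    have h2 : P w * Real.exp (-w)^2 = 4*Real.pi^2 - β*Real.exp (-w) + c*Real.exp (-w)^2 := by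
      simp only [hPdef]
      rw [h2w, Real.exp_neg]
      field_simp
    calc N w * Real.exp (-w)
        = 2*c*Real.exp (-w) - β*(Real.exp w * Real.exp (-w))
            + 2*q*(Real.sqrt (P w) * Real.exp (-w)) := by simp only [hNdef]; ring
      _ = 2*c*Real.exp (-w) - β + 2*q*Real.sqrt (4*Real.pi^2 - β*Real.exp (-w) + c*Real.exp (-w)^2) := by
          rw [hee, h1, h2]; ring
  have hexp0 : Tendsto (fun w : ℝ => Real.exp (-w)) atTop (𝓝 0) :=
    Real.tendsto_exp_neg_atTop_nhds_zero
  have hinner : Tendsto (fun w => 4*Real.pi^2 - β*Real.exp (-w) + c*Real.exp (-w)^2)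
      atTop (𝓝 (4*Real.pi^2)) := by
    have h := ((tendsto_const_nhds (x := (4*Real.pi^2 : ℝ))).sub (hexp0.const_mul β)).add
      ((hexp0.pow 2).const_mul c)
    convert h using 2
    ring
  have hsqrt : Tendsto (fun w => Real.sqrt (4*Real.pi^2 - β*Real.exp (-w) + c*Real.exp (-w)^2))
      atTop (𝓝 (2*Real.pi)) := by
    have h := (Real.continuous_sqrt.continuousAt (x := 4*Real.pi^2)).tendsto.comp hinner
    have h4 : Real.sqrt (4*Real.pi^2) = 2*Real.pi := by
      rw [show (4*Real.pi^2 : ℝ) = (2*Real.pi)^2 by ring, Real.sqrt_sq (by positivity)]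
    rw [h4] at h
    exact h
  have hMlim : Tendsto (fun w => N w * Real.exp (-w)) atTop (𝓝 (4*Real.pi*q - β)) := by
    rw [show (4*Real.pi*q - β) = 2*c*0 - β + 2*q*(2*Real.pi) by ring]
    exact Tendsto.congr (fun w => (hM w).symm)
      (((hexp0.const_mul (2*c)).sub tendsto_const_nhds).add (hsqrt.const_mul (2*q)))
  have hGlim : Tendsto (fun w => q⁻¹ * (w - Real.log (N w))) atTop
      (𝓝 (-(q⁻¹ * Real.log (4*Real.pi*q - β)))) := by
    have hlogM : Tendsto (fun w => Real.log (N w * Real.exp (-w))) atTop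
        (𝓝 (Real.log (4*Real.pi*q - β))) :=
      (Real.continuousAt_log hBpos.ne').tendsto.comp hMlim
    have heq : ∀ w, q⁻¹ * (w - Real.log (N w)) = -(q⁻¹ * Real.log (N w * Real.exp (-w))) := by
      intro w
      rw [Real.log_mul (hNpos w).ne' (Real.exp_ne_zero _), Real.log_exp]
      ring
    exact Tendsto.congr (fun w => (heq w).symm) (hlogM.const_mul q⁻¹).neg
  have hint := integral_Ioi_of_hasDerivAt_of_nonneg (a := (0:ℝ))
      (g := fun w => q⁻¹ * (w - Real.log (N w)))
      (g' := fun w => (Real.sqrt (4 * Real.pi ^ 2 * Real.exp (2 * w) - β * Real.exp w + γ - E))⁻¹)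
      ((hderiv 0).continuousAt.continuousWithinAt)
      (fun x _ => hderiv x) (fun x _ => by positivity) hGlim
  rw [hint]
  have hN0 : N 0 = 2*c - β + 2*q*Real.sqrt (c + 4*Real.pi^2 - β) := by
    have harg0 : 4 * Real.pi ^ 2 * Real.exp (2*0) - β * Real.exp 0 + c = c + 4*Real.pi^2 - β := by
      rw [mul_zero, Real.exp_zero]; ring
    have : N 0 = 2*c - β * Real.exp 0 + 2*q*Real.sqrt (4 * Real.pi ^ 2 * Real.exp (2*0) - β * Real.exp 0 + c) := rfl
    rw [this, harg0, Real.exp_zero]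
    ring
  rw [← hN0]
  ring

lemma part1 (β γ : ℝ) (hβ : 0 ≤ β) :
    Tendsto (fun E : ℝ =>
        E * ((1 / 2) * (∫ w in Set.Ioi (0:ℝ),
            (Real.sqrt (4 * Real.pi ^ 2 * Real.exp (2 * w) - β * Real.exp w + γ - E))⁻¹)
          - (1 / (2 * Real.sqrt (-E))) * Real.log (Real.sqrt (-E) / Real.pi)))
      atBot (𝓝 (-β / (8 * Real.pi))) := by
  rw [show (atBot : Filter ℝ) = map Neg.neg atTop from Filter.map_neg_atTop.symm,
    Filter.tendsto_map'_iff]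
  have hΨ := tendsto_Psi β γ hβ
  have hlim : (-β/(8*Real.pi) : ℝ) = -β / (8 * Real.pi) := rfl
  apply hΨ.congr'
  filter_upwards [eventually_ge_atTop (1:ℝ), eventually_ge_atTop (β^2+1-γ)] with s hs1 hs2
  have hcβ : β^2 + 1 ≤ γ - -s := by linarith
  simp only [Function.comp_def]
  rw [integral_eval β γ hβ (-s) hcβ]
  simp only [sub_neg_eq_add, neg_neg]
  rw [show (1 / (2 * Real.sqrt s)) * Real.log (Real.sqrt s / Real.pi)
      = 1/(2*Real.sqrt s) * Real.log (Real.sqrt s/Real.pi) from rfl]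
  exact (decomp β γ s hβ hs1 (by linarith)).symm

end MorseAux


open MorseAux in
/-- Asymptotic matching of the tunnelling time
`T(E) = (1/2)∫₀^∞ (4π²e^{2w} − βe^w + γ − E)^{−1/2} dw`:
`E(T(E) − (1/(2√(−E))) log(√(−E)/π)) → −β/(8π)` as `E → −∞`; in particular `T(E)`
matches `(1/(2√(−E))) log(√(−E)/π) − κ/(2E)` to order `E⁻¹` iff `β = 4πκ`. -/
theorem morse_tunnelling_time_matching (β γ : ℝ) (hβ : 0 ≤ β) :
    Tendsto (fun E : ℝ =>
        E * ((1 / 2) * (∫ w in Set.Ioi (0:ℝ),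
            (Real.sqrt (4 * Real.pi ^ 2 * Real.exp (2 * w) - β * Real.exp w + γ - E))⁻¹)
          - (1 / (2 * Real.sqrt (-E))) * Real.log (Real.sqrt (-E) / Real.pi)))
      atBot (nhds (-β / (8 * Real.pi)))
    ∧ ∀ κ : ℝ,
      Tendsto (fun E : ℝ =>
        E * ((1 / 2) * (∫ w in Set.Ioi (0:ℝ),
            (Real.sqrt (4 * Real.pi ^ 2 * Real.exp (2 * w) - β * Real.exp w + γ - E))⁻¹)
          - (1 / (2 * Real.sqrt (-E))) * Real.log (Real.sqrt (-E) / Real.pi)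
          + κ / (2 * E)))
        atBot (nhds 0) ↔ β = 4 * Real.pi * κ := by
  have hmain := part1 β γ hβ
  refine ⟨hmain, fun κ => ?_⟩
  have hπ := Real.pi_pos
  have heq : ∀ᶠ E in (atBot : Filter ℝ),
      E * ((1 / 2) * (∫ w in Set.Ioi (0:ℝ),
            (Real.sqrt (4 * Real.pi ^ 2 * Real.exp (2 * w) - β * Real.exp w + γ - E))⁻¹)
          - (1 / (2 * Real.sqrt (-E))) * Real.log (Real.sqrt (-E) / Real.pi)
          + κ / (2 * E))
      = E * ((1 / 2) * (∫ w in Set.Ioi (0:ℝ),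
            (Real.sqrt (4 * Real.pi ^ 2 * Real.exp (2 * w) - β * Real.exp w + γ - E))⁻¹)
          - (1 / (2 * Real.sqrt (-E))) * Real.log (Real.sqrt (-E) / Real.pi)) + κ/2 := by
    filter_upwards [eventually_lt_atBot (0:ℝ)] with E hE
    have hE0 : E ≠ 0 := hE.ne
    field_simp
  have h2 : Tendsto (fun E : ℝ =>
      E * ((1 / 2) * (∫ w in Set.Ioi (0:ℝ),
            (Real.sqrt (4 * Real.pi ^ 2 * Real.exp (2 * w) - β * Real.exp w + γ - E))⁻¹)
          - (1 / (2 * Real.sqrt (-E))) * Real.log (Real.sqrt (-E) / Real.pi)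
          + κ / (2 * E)))
      atBot (nhds (-β / (8 * Real.pi) + κ/2)) :=
    Tendsto.congr' (heq.mono fun E h => h.symm) (hmain.add_const (κ/2))
  constructor
  · intro h
    have huniq := tendsto_nhds_unique h2 h
    field_simp at huniq
    linarith
  · intro h
    have hz : -β / (8 * Real.pi) + κ/2 = 0 := by
      rw [h]; field_simp; ring
    rw [hz] at h2
    exact h2
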